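/- arXiv:1804.09338 — 3 statements merged into one kernel-verified Lean document; each statement's English description precedes it below -/
import Mathlib

section
/- Let G = (V,E) be a graph with n vertices and let G' be the split graph with vertex set V^1 ∪ V ∪ E (V^1 a copy of V), edges making V a clique, pendant-style edges v_i v_i', and edges ve for v incident to e. If G' admits a Roman {2}-dominating function of weight at most 2k + (n − k) with k ≤ n, then G has a vertex cover of size at most k. -/
open scoped Classical
open Finset

open scoped Classical in
noncomputable def nbrSum {V : Type*} [Fintype V] (G : SimpleGraph V) (f : V → ℕ) (v : V) : ℕ :=
  ∑ u ∈ Finset.univ.filter (fun u => G.Adj v u), f u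

def IsR2DF {V : Type*} [Fintype V] (G : SimpleGraph V) (f : V → ℕ) : Prop :=
  (∀ v, f v ≤ 2) ∧ ∀ v, f v = 0 → 2 ≤ nbrSum G f v

/-- Vertices of the split graph `G'`: a copy `V¹` of `V` (left), the original
vertices `V`, and one vertex for each edge of `G`. -/
abbrev SplitVert {V : Type*} (G : SimpleGraph V) : Type _ :=
  V ⊕ V ⊕ {e : Sym2 V // e ∈ G.edgeSet}

/-- One-directional relation generating the split graph: `V` is a clique, each copy
vertex `vᵢ'` is joined to `vᵢ`, and each edge-vertex is joined to its two endpoints. -/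
def splitRel {V : Type*} (G : SimpleGraph V) : SplitVert G → SplitVert G → Prop
  | .inl a, .inr (.inl b) => a = b
  | .inr (.inl _), .inr (.inl _) => True
  | .inr (.inl a), .inr (.inr e) => a ∈ (e : Sym2 V)
  | _, _ => False

/-- The split graph `G'` constructed from `G`. -/
def splitGraph {V : Type*} (G : SimpleGraph V) : SimpleGraph (SplitVert G) :=
  SimpleGraph.fromRel (splitRel G)

lemma adj_inl {V : Type*} (G : SimpleGraph V) (v : V) (u : SplitVert G) :
    (splitGraph G).Adj (.inl v) u ↔ u = .inr (.inl v) := by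
  rcases u with a | a | e <;>
    simp [splitGraph, SimpleGraph.fromRel_adj, splitRel] <;> tauto

lemma adj_edge {V : Type*} (G : SimpleGraph V) (e : {e : Sym2 V // e ∈ G.edgeSet})
    (u : SplitVert G) :
    (splitGraph G).Adj (.inr (.inr e)) u ↔ ∃ a ∈ (e : Sym2 V), u = .inr (.inl a) := by
  rcases u with a | a | e' <;>
    simp [splitGraph, SimpleGraph.fromRel_adj, splitRel] <;> tauto

lemma nbr_inl {V : Type*} [Fintype V] (G : SimpleGraph V) (f : SplitVert G → ℕ) (v : V) :
    nbrSum (splitGraph G) f (.inl v) = f (.inr (.inl v)) := by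
  unfold nbrSum
  rw [show Finset.univ.filter (fun u => (splitGraph G).Adj (.inl v) u)
      = {(.inr (.inl v) : SplitVert G)} from by ext u; simp [adj_inl]]
  simp

lemma nbr_edge {V : Type*} [Fintype V] (G : SimpleGraph V) (f : SplitVert G → ℕ)
    (a b : V) (hab : G.Adj a b) (he : s(a, b) ∈ G.edgeSet) :
    nbrSum (splitGraph G) f (.inr (.inr ⟨s(a, b), he⟩))
      = f (.inr (.inl a)) + f (.inr (.inl b)) := by
  unfold nbrSum
  rw [show Finset.univ.filter (fun u => (splitGraph G).Adj (.inr (.inr ⟨s(a,b), he⟩)) u)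
      = {(.inr (.inl a) : SplitVert G), .inr (.inl b)} from by
        ext u
        simp only [adj_edge, Finset.mem_filter, Finset.mem_univ, true_and,
          Finset.mem_insert, Finset.mem_singleton]
        constructor
        · rintro ⟨c, hc, rfl⟩
          rw [Sym2.mem_iff] at hc
          rcases hc with rfl | rfl <;> simp
        · rintro (rfl | rfl)
          exacts [⟨a, by simp, rfl⟩, ⟨b, by simp, rfl⟩]]
  rw [Finset.sum_pair (by simp [hab.ne])]

theorem stmt_3 {V : Type*} [Fintype V] (G : SimpleGraph V) (k : ℕ) (hk : k ≤ Fintype.card V)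
    (h : ∃ f : SplitVert G → ℕ, IsR2DF (splitGraph G) f ∧
      ∑ x, f x ≤ 2 * k + (Fintype.card V - k)) :
    ∃ C : Set V, (∀ ⦃a b : V⦄, G.Adj a b → a ∈ C ∨ b ∈ C) ∧ C.ncard ≤ k := by
  obtain ⟨f, ⟨hf2, hf0⟩, hw⟩ := h
  have key : ∀ v : V, 1 + (if 1 ≤ f (.inr (.inl v)) then 1 else 0)
      ≤ f (.inl v) + f (.inr (.inl v)) := by
    intro v
    by_cases h0 : f (.inl v) = 0
    · have := hf0 _ h0
      rw [nbr_inl] at this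
      split <;> omega
    · split <;> omega
  set A : Finset V := Finset.univ.filter (fun v => 1 ≤ f (.inr (.inl v))) with hA
  set B : Finset {e : Sym2 V // e ∈ G.edgeSet} :=
    Finset.univ.filter (fun e => 1 ≤ f (.inr (.inr e))) with hB
  have hsum : Fintype.card V + A.card + B.card ≤ ∑ x, f x := by
    rw [Fintype.sum_sum_type, Fintype.sum_sum_type]
    have h1 : Fintype.card V + A.card ≤ ∑ v, f (.inl v) + ∑ v, f (.inr (.inl v)) := by
      calc Fintype.card V + A.card
          = ∑ v : V, (1 + (if 1 ≤ f (.inr (.inl v)) then 1 else 0)) := by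
            rw [Finset.sum_add_distrib]
            congr 1
            · simp
            · rw [hA, Finset.card_filter]
        _ ≤ ∑ v : V, (f (.inl v) + f (.inr (.inl v))) :=
            Finset.sum_le_sum (fun v _ => key v)
        _ = _ := Finset.sum_add_distrib
    have h2 : B.card ≤ ∑ e, f (.inr (.inr e)) := by
      calc B.card = ∑ e ∈ B, 1 := by simp
        _ ≤ ∑ e ∈ B, f (.inr (.inr e)) :=
            Finset.sum_le_sum (fun e he => (Finset.mem_filter.mp he).2)
        _ ≤ ∑ e, f (.inr (.inr e)) :=
            Finset.sum_le_sum_of_subset (Finset.subset_univ _)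
    omega
  have hcard : A.card + B.card ≤ k := by omega
  set pick : {e : Sym2 V // e ∈ G.edgeSet} → V :=
    fun e => (@Quotient.out _ (Sym2.Rel.setoid V) (e : Sym2 V)).1 with hpick
  have hpickmem : ∀ e : {e : Sym2 V // e ∈ G.edgeSet}, pick e ∈ (e : Sym2 V) :=
    fun e => Sym2.out_fst_mem _
  refine ⟨↑(A ∪ B.image pick), ?_, ?_⟩
  · intro a b hab
    have he : s(a, b) ∈ G.edgeSet := hab
    by_cases hfe : f (.inr (.inr ⟨s(a, b), he⟩)) = 0
    · have h2 := hf0 _ hfe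
      rw [nbr_edge G f a b hab he] at h2
      have : 1 ≤ f (.inr (.inl a)) ∨ 1 ≤ f (.inr (.inl b)) := by omega
      rcases this with h1 | h1
      · exact Or.inl (by simp [hA, h1])
      · exact Or.inr (by simp [hA, h1])
    · have heB : (⟨s(a, b), he⟩ : {e : Sym2 V // e ∈ G.edgeSet}) ∈ B := by
        simp [hB]; omega
      have hcC : pick ⟨s(a, b), he⟩ ∈ (↑(A ∪ B.image pick) : Set V) :=
        Finset.mem_coe.mpr (Finset.mem_union_right _ (Finset.mem_image_of_mem _ heB))
      have hc := hpickmem ⟨s(a, b), he⟩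
      rw [Sym2.mem_iff] at hc
      rcases hc with hc | hc
      · exact Or.inl (hc ▸ hcC)
      · exact Or.inr (hc ▸ hcC)
  · rw [Set.ncard_coe_finset]
    calc (A ∪ B.image pick).card ≤ A.card + (B.image pick).card := Finset.card_union_le _ _
      _ ≤ A.card + B.card := by gcongr; exact Finset.card_image_le
      _ ≤ k := hcard
end

section
/- Let g be a Roman {2}-dominating function on the split graph G' (constructed from G as above) of minimum weight chosen so that the number of vertices of V^1 assigned value 2 is minimized. Then no vertex of V^1 is assigned the value 2 by g. -/
open scoped Classical
open Finset

lemma adj_inl_iff {V : Type*} (G : SimpleGraph V) (i : V) (v : SplitVert G) :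
    (splitGraph G).Adj v (Sum.inl i) ↔ v = Sum.inr (Sum.inl i) := by
  constructor
  · rintro ⟨hne, h | h⟩
    · cases v with
      | inl a => exact absurd h (by simp [splitRel])
      | inr b => cases b with
        | inl a => exact absurd h (by simp [splitRel])
        | inr e => exact absurd h (by simp [splitRel])
    · cases v with
      | inl a => exact absurd h (by simp [splitRel])
      | inr b => cases b with
        | inl a =>
          have : i = a := h
          subst this; rfl
        | inr e => exact absurd h (by simp [splitRel])
  · rintro rfl
    exact ⟨by simp, Or.inr rfl⟩

theorem stmt_4 {V : Type*} [Fintype V] (G : SimpleGraph V) (g : SplitVert G → ℕ)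
    (hg : IsR2DF (splitGraph G) g)
    (hmin : ∀ g' : SplitVert G → ℕ, IsR2DF (splitGraph G) g' → ∑ x, g x ≤ ∑ x, g' x)
    (hcount : ∀ g' : SplitVert G → ℕ, IsR2DF (splitGraph G) g' → ∑ x, g' x = ∑ x, g x →
      (Finset.univ.filter (fun i : V => g (Sum.inl i) = 2)).card ≤
        (Finset.univ.filter (fun i : V => g' (Sum.inl i) = 2)).card) :
    ∀ i : V, g (Sum.inl i) ≠ 2 := by
  intro i hgi
  classical
  set a : SplitVert G := Sum.inl i with ha
  set b : SplitVert G := Sum.inr (Sum.inl i) with hb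
  have hab : a ≠ b := by simp [ha, hb]
  set g' : SplitVert G → ℕ := fun x => if x = a then 0 else if x = b then 2 else g x with hg'
  have hg'a : g' a = 0 := by simp [hg']
  have hg'b : g' b = 2 := by simp [hg', hab.symm]
  have hge : ∀ u, u ≠ a → g u ≤ g' u := by
    intro u hu
    by_cases hub : u = b
    · subst hub; rw [hg'b]; exact hg.1 _
    · simp [hg', hu, hub]
  -- g' is R2DF
  have hR : IsR2DF (splitGraph G) g' := by
    constructor
    · intro v
      by_cases h1 : v = a
      · simp [hg', h1]
      by_cases h2 : v = b
      · simp [hg', h2, hab.symm]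
      · simpa [hg', h1, h2] using hg.1 v
    · intro v hv
      by_cases h1 : v = a
      · subst h1
        have hadj : (splitGraph G).Adj a b := by
          refine ⟨hab, Or.inl ?_⟩
          show i = i; rfl
        have hmem : b ∈ Finset.univ.filter (fun u => (splitGraph G).Adj a u) := by
          simp [hadj]
        calc 2 = g' b := hg'b.symm
          _ ≤ _ := Finset.single_le_sum (fun u _ => Nat.zero_le _) hmem
      · have hgv : g v = 0 := by
          by_cases h2 : v = b
          · exact absurd hv (by rw [h2, hg'b]; omega)
          · simpa [hg', h1, h2] using hv
        have h2 := hg.2 v hgv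
        refine h2.trans (Finset.sum_le_sum ?_)
        intro u hu
        rw [Finset.mem_filter] at hu
        refine hge u ?_
        intro hua
        subst hua
        have := (adj_inl_iff G i v).mp hu.2
        rw [← hb] at this
        rw [this, hg'b] at hv
        omega
  -- sum decomposition
  have hbmem : b ∈ (Finset.univ : Finset (SplitVert G)).erase a := by
    simp [hab.symm]
  have key : ∀ f : SplitVert G → ℕ, ∑ x, f x =
      f a + (f b + ∑ x ∈ ((Finset.univ : Finset (SplitVert G)).erase a).erase b, f x) := by
    intro f
    rw [Finset.add_sum_erase _ f hbmem, Finset.add_sum_erase _ f (Finset.mem_univ a)]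
  have hrest : ∑ x ∈ ((Finset.univ : Finset (SplitVert G)).erase a).erase b, g' x =
      ∑ x ∈ ((Finset.univ : Finset (SplitVert G)).erase a).erase b, g x := by
    refine Finset.sum_congr rfl ?_
    intro x hx
    rw [Finset.mem_erase, Finset.mem_erase] at hx
    simp [hg', hx.1, hx.2.1]
  have hsum' := key g'
  have hsum := key g
  rw [hg'a, hg'b, hrest] at hsum'
  rw [hgi] at hsum
  have hle := hmin g' hR
  have hb0 : g b = 0 := by omega
  have heq : ∑ x, g' x = ∑ x, g x := by omega
  have hcard := hcount g' hR heq
  have hsub : Finset.univ.filter (fun j : V => g' (Sum.inl j) = 2) =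
      (Finset.univ.filter (fun j : V => g (Sum.inl j) = 2)).erase i := by
    ext j
    simp only [Finset.mem_filter, Finset.mem_erase, Finset.mem_univ, true_and]
    constructor
    · intro h
      by_cases hji : j = i
      · exfalso; rw [hji] at h; rw [← ha, hg'a] at h; omega
      · refine ⟨hji, ?_⟩
        have h1 : (Sum.inl j : SplitVert G) ≠ a := by simp [ha, hji]
        have h2 : (Sum.inl j : SplitVert G) ≠ b := by simp [hb]
        simpa [hg', h1, h2] using h
    · rintro ⟨hji, h⟩
      have h1 : (Sum.inl j : SplitVert G) ≠ a := by simp [ha, hji]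
      have h2 : (Sum.inl j : SplitVert G) ≠ b := by simp [hb]
      rw [hg']; simp only [if_neg h1, if_neg h2]; exact h
  have himem : i ∈ Finset.univ.filter (fun j : V => g (Sum.inl j) = 2) := by
    simp only [Finset.mem_filter, Finset.mem_univ, true_and]; exact hgi
  rw [hsub, Finset.card_erase_of_mem himem] at hcard
  have hpos : 0 < (Finset.univ.filter (fun j : V => g (Sum.inl j) = 2)).card :=
    Finset.card_pos.mpr ⟨i, himem⟩
  omega
end

section
/- Let G be a graph with vertex cover number τ(G) and let G' be the split graph constructed from G (copy V^1 of V, clique on V, edges v_i v_i', and edges from each e ∈ E to its two endpoints). Then γ_{R2}(G') = n + τ(G), where n = |V(G)|. -/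
open scoped Classical
open Finset

/-- The Roman {2}-domination number. -/
noncomputable def gammaR2 {W : Type*} [Fintype W] (H : SimpleGraph W) : ℕ :=
  sInf {w | ∃ f : W → ℕ, IsR2DF H f ∧ w = ∑ v, f v}

/-- The vertex cover number. -/
noncomputable def tau {V : Type*} [Fintype V] (G : SimpleGraph V) : ℕ :=
  sInf {k | ∃ C : Set V, (∀ ⦃a b : V⦄, G.Adj a b → a ∈ C ∨ b ∈ C) ∧ C.ncard = k}

section Helpers

variable {V : Type*} [Fintype V] (G : SimpleGraph V)

lemma filter_adj_inl (a : V) :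
    Finset.univ.filter (fun u => (splitGraph G).Adj (Sum.inl a) u)
      = {Sum.inr (Sum.inl a)} := by
  ext u
  simp only [Finset.mem_filter, Finset.mem_univ, true_and, Finset.mem_singleton,
    splitGraph, SimpleGraph.fromRel_adj]
  rcases u with b | b | e
  · simp [splitRel]
  · simp [splitRel, eq_comm]
  · simp [splitRel]

lemma nbrSum_inl (f : SplitVert G → ℕ) (a : V) :
    nbrSum (splitGraph G) f (Sum.inl a) = f (Sum.inr (Sum.inl a)) := by
  rw [nbrSum, filter_adj_inl, Finset.sum_singleton]

lemma filter_adj_edge (a b : V) (h : G.Adj a b) :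
    Finset.univ.filter
        (fun u => (splitGraph G).Adj (Sum.inr (Sum.inr ⟨s(a,b), G.mem_edgeSet.mpr h⟩)) u)
      = {Sum.inr (Sum.inl a), Sum.inr (Sum.inl b)} := by
  ext u
  simp only [Finset.mem_filter, Finset.mem_univ, true_and, Finset.mem_insert,
    Finset.mem_singleton, splitGraph, SimpleGraph.fromRel_adj]
  rcases u with c | c | e
  · simp [splitRel]
  · simp [splitRel, Sym2.mem_iff]
  · simp [splitRel]

lemma nbrSum_edge (f : SplitVert G → ℕ) (a b : V) (h : G.Adj a b) :
    nbrSum (splitGraph G) f (Sum.inr (Sum.inr ⟨s(a,b), G.mem_edgeSet.mpr h⟩))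
      = f (Sum.inr (Sum.inl a)) + f (Sum.inr (Sum.inl b)) := by
  rw [nbrSum, filter_adj_edge G a b h, Finset.sum_pair]
  simp [h.ne]

lemma adj_clique {a b : V} (hab : a ≠ b) :
    (splitGraph G).Adj (Sum.inr (Sum.inl a)) (Sum.inr (Sum.inl b)) := by
  rw [splitGraph, SimpleGraph.fromRel_adj]
  exact ⟨by simp [hab], Or.inl trivial⟩

lemma adj_edge_endpoint {a : V} {e : {e : Sym2 V // e ∈ G.edgeSet}} (ha : a ∈ (e : Sym2 V)) :
    (splitGraph G).Adj (Sum.inr (Sum.inr e)) (Sum.inr (Sum.inl a)) := by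
  rw [splitGraph, SimpleGraph.fromRel_adj]
  exact ⟨by simp, Or.inr ha⟩

end Helpers


lemma weight_ge {V : Type*} [Fintype V] (G : SimpleGraph V) (f : SplitVert G → ℕ)
    (hf : IsR2DF (splitGraph G) f) : Fintype.card V + tau G ≤ ∑ v, f v := by
  classical
  have hpair : ∀ v : V, f (Sum.inl v) = 0 → 2 ≤ f (Sum.inr (Sum.inl v)) := by
    intro v hv
    have := hf.2 _ hv
    rwa [nbrSum_inl] at this
  have key1 : ∀ v : V, 1 ≤ f (Sum.inl v) + f (Sum.inr (Sum.inl v)) := by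
    intro v
    by_cases h : f (Sum.inl v) = 0
    · have := hpair v h; omega
    · omega
  have key2 : ∀ v : V, 1 ≤ f (Sum.inr (Sum.inl v)) →
      2 ≤ f (Sum.inl v) + f (Sum.inr (Sum.inl v)) := by
    intro v hv
    by_cases h : f (Sum.inl v) = 0
    · have := hpair v h; omega
    · omega
  set C2 : Finset V := Finset.univ.filter (fun v => 1 ≤ f (Sum.inr (Sum.inl v))) with hC2
  set E1 : Finset {e : Sym2 V // e ∈ G.edgeSet} :=
    Finset.univ.filter (fun e => 1 ≤ f (Sum.inr (Sum.inr e))) with hE1def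
  have hex : ∀ e : Sym2 V, ∃ a, a ∈ e := fun e => Sym2.inductionOn e (fun a b => ⟨a, by simp⟩)
  set pick : Sym2 V → V := fun e => Classical.choose (hex e) with hpickdef
  have hpick : ∀ e : Sym2 V, pick e ∈ e := fun e => Classical.choose_spec (hex e)
  set CF : Finset V := C2 ∪ E1.image (fun e => pick e.1) with hCF
  have hcoverF : ∀ ⦃a b : V⦄, G.Adj a b → a ∈ CF ∨ b ∈ CF := by
    intro a b hab
    set ev : {e : Sym2 V // e ∈ G.edgeSet} := ⟨s(a,b), G.mem_edgeSet.mpr hab⟩ with hev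
    by_cases h1 : 1 ≤ f (Sum.inr (Sum.inr ev))
    · have hmem : pick ev.1 ∈ CF := by
        refine Finset.mem_union_right _ (Finset.mem_image.mpr ⟨ev, ?_, rfl⟩)
        simp [hE1def, h1]
      have hm := hpick ev.1
      have : pick ev.1 = a ∨ pick ev.1 = b := by
        have : pick ev.1 ∈ s(a, b) := hm
        simpa [Sym2.mem_iff] using this
      rcases this with h | h
      · left; rw [← h]; exact hmem
      · right; rw [← h]; exact hmem
    · have h0 : f (Sum.inr (Sum.inr ev)) = 0 := by omega
      have h2 := hf.2 _ h0
      rw [hev, nbrSum_edge G f a b hab] at h2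
      have : 1 ≤ f (Sum.inr (Sum.inl a)) ∨ 1 ≤ f (Sum.inr (Sum.inl b)) := by omega
      rcases this with h | h
      · exact Or.inl (Finset.mem_union_left _ (by simp [hC2, h]))
      · exact Or.inr (Finset.mem_union_left _ (by simp [hC2, h]))
  have htau : tau G ≤ CF.card := by
    apply Nat.sInf_le
    exact ⟨↑CF, fun a b hab => by
      simpa only [Finset.mem_coe] using hcoverF hab, Set.ncard_coe_finset _⟩
  have hcardCF : CF.card ≤ C2.card + E1.card := by
    calc CF.card ≤ C2.card + (E1.image (fun e => pick e.1)).card := Finset.card_union_le _ _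
    _ ≤ C2.card + E1.card := by gcongr; exact Finset.card_image_le
  have hAB : Fintype.card V + C2.card ≤
      ∑ a, f (Sum.inl a) + ∑ a, f (Sum.inr (Sum.inl a)) := by
    rw [← Finset.sum_add_distrib]
    have : Fintype.card V + C2.card = ∑ v : V, (1 + if v ∈ C2 then 1 else 0) := by
      rw [Finset.sum_add_distrib]
      simp [Finset.sum_ite_mem]
    rw [this]
    apply Finset.sum_le_sum
    intro v _
    by_cases hv : v ∈ C2
    · simp only [hv, if_true]
      exact key2 v (by simpa [hC2] using hv)
    · simp only [hv, if_false]
      simpa using key1 v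
  have hEdge : E1.card ≤ ∑ e, f (Sum.inr (Sum.inr e)) := by
    have : E1.card = ∑ e : {e : Sym2 V // e ∈ G.edgeSet}, (if e ∈ E1 then 1 else 0) := by
      simp [Finset.sum_ite_mem]
    rw [this]
    apply Finset.sum_le_sum
    intro e _
    by_cases he : e ∈ E1
    · simp only [he, if_true]
      simpa [hE1def] using he
    · simp [he]
  have hsplit : ∑ v, f v = ∑ a, f (Sum.inl a) +
      (∑ a, f (Sum.inr (Sum.inl a)) + ∑ e, f (Sum.inr (Sum.inr e))) := by
    rw [Fintype.sum_sum_type]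
    congr 1
    rw [Fintype.sum_sum_type]
  omega

lemma gammaR2_le {V : Type*} [Fintype V] (G : SimpleGraph V) (hE : ∃ a b, G.Adj a b) :
    gammaR2 (splitGraph G) ≤ Fintype.card V + tau G := by
  classical
  have htau : tau G ∈ {k | ∃ C : Set V, (∀ ⦃a b : V⦄, G.Adj a b → a ∈ C ∨ b ∈ C) ∧ C.ncard = k} := by
    apply Nat.sInf_mem
    exact ⟨Set.univ.ncard, Set.univ, fun a b _ => Or.inl trivial, rfl⟩
  obtain ⟨C, hCcov, hCcard⟩ := htau
  obtain ⟨a0, b0, hab0⟩ := hE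
  have hCne : ∃ u, u ∈ C := by
    rcases hCcov hab0 with h | h
    · exact ⟨a0, h⟩
    · exact ⟨b0, h⟩
  set f : SplitVert G → ℕ := fun x =>
    match x with
    | .inl a => if a ∈ C then 0 else 1
    | .inr (.inl a) => if a ∈ C then 2 else 0
    | .inr (.inr _) => 0
    with hfdef
  have hR2 : IsR2DF (splitGraph G) f := by
    constructor
    · rintro (a | a | e) <;> simp only [hfdef]
      · split <;> omega
      · split <;> omega
      · omega
    · rintro (a | a | e) h0
      · -- copy vertex
        rw [nbrSum_inl]
        have ha : a ∈ C := by by_contra hc; simp [hfdef, hc] at h0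
        simp [hfdef, ha]
      · -- clique vertex
        have ha : a ∉ C := by intro hc; simp [hfdef, hc] at h0
        obtain ⟨u, hu⟩ := hCne
        have hne : u ≠ a := fun h => ha (h ▸ hu)
        have hmem : Sum.inr (Sum.inl u) ∈
            Finset.univ.filter (fun w => (splitGraph G).Adj (Sum.inr (Sum.inl a)) w) := by
          refine Finset.mem_filter.mpr ⟨Finset.mem_univ _, adj_clique G hne.symm⟩
        calc (2 : ℕ) = f (Sum.inr (Sum.inl u)) := by simp [hfdef, hu]
        _ ≤ nbrSum (splitGraph G) f (Sum.inr (Sum.inl a)) :=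
          Finset.single_le_sum (fun i _ => Nat.zero_le _) hmem
      · -- edge vertex
        obtain ⟨e, he⟩ := e
        induction e using Sym2.inductionOn with
        | hf a b =>
          have hab : G.Adj a b := G.mem_edgeSet.mp he
          rw [show (⟨s(a,b), he⟩ : {e : Sym2 V // e ∈ G.edgeSet})
              = ⟨s(a,b), G.mem_edgeSet.mpr hab⟩ from rfl,
            nbrSum_edge G f a b hab]
          rcases hCcov hab with h | h <;> simp [hfdef, h]
  have hsum : ∑ v, f v = Fintype.card V + tau G := by
    rw [Fintype.sum_sum_type, Fintype.sum_sum_type]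
    have h3 : ∑ e : {e : Sym2 V // e ∈ G.edgeSet}, f (Sum.inr (Sum.inr e)) = 0 := by
      simp [hfdef]
    rw [h3, add_zero, ← Finset.sum_add_distrib]
    have : ∀ v : V, f (Sum.inl v) + f (Sum.inr (Sum.inl v))
        = 1 + (if v ∈ C.toFinset then 1 else 0) := by
      intro v
      by_cases hv : v ∈ C <;> simp [hfdef, hv]
    rw [Finset.sum_congr rfl (fun v _ => this v), Finset.sum_add_distrib]
    simp only [Finset.sum_ite_mem, Finset.univ_inter, Finset.sum_const, smul_eq_mul, mul_one,
      Finset.sum_const, Finset.card_univ]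
    rw [← Set.ncard_eq_toFinset_card', hCcard]
  exact Nat.sInf_le ⟨f, hR2, hsum.symm⟩


theorem stmt_19 {V : Type*} [Fintype V] (G : SimpleGraph V) (hE : ∃ a b, G.Adj a b) :
    gammaR2 (splitGraph G) = Fintype.card V + tau G := by
  refine le_antisymm (gammaR2_le G hE) ?_
  have hne : {w | ∃ f : SplitVert G → ℕ, IsR2DF (splitGraph G) f ∧ w = ∑ v, f v}.Nonempty := by
    refine ⟨∑ v, (fun _ => 2 : SplitVert G → ℕ) v, fun _ => 2, ⟨fun _ => le_refl 2, ?_⟩, rfl⟩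
    intro v hv; simp at hv
  obtain ⟨f, hf, hw⟩ := Nat.sInf_mem hne
  rw [gammaR2, hw]
  exact weight_ge G f hf
end
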